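/- For all real numbers $x, y$ and $p > 1$, one has $|x^+ - y^+|^p \leq |x-y|^{p-2}(x-y)(x^+ - y^+)$, where $t^+ = \max(t,0)$ is the positive part. -/
import Mathlib


/-- For all real `x, y` and `p > 1`, with `t⁺ = max t 0` the positive part,
`|x⁺ - y⁺|^p ≤ |x-y|^(p-2) (x-y) (x⁺ - y⁺)` (the expression `|x-y|^(p-2)(x-y)` being `0`
when `x = y`, which is automatic with real powers). -/
theorem pos_part_inequality (p : ℝ) (hp : 1 < p) (x y : ℝ) :
    |max x 0 - max y 0| ^ p ≤
      |x - y| ^ (p - 2) * (x - y) * (max x 0 - max y 0) := by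
  set a := x - y with ha
  set b := max x 0 - max y 0 with hb
  have hab : 0 ≤ a * b := by
    rcases le_total y x with h | h
    · have h1 : 0 ≤ a := by simp [ha]; linarith
      have h2 : 0 ≤ b := sub_nonneg.2 (max_le_max h le_rfl)
      exact mul_nonneg h1 h2
    · have h1 : a ≤ 0 := by simp [ha]; linarith
      have h2 : b ≤ 0 := sub_nonpos.2 (max_le_max h le_rfl)
      nlinarith
  have hba : |b| ≤ |a| := abs_max_sub_max_le_abs x y 0
  rcases eq_or_ne b 0 with hb0 | hb0
  · rw [hb0]
    simp [Real.zero_rpow (by linarith : p ≠ 0)]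
  · have hbpos : 0 < |b| := abs_pos.mpr hb0
    have hapos : 0 < |a| := lt_of_lt_of_le hbpos hba
    have key : |a| ^ (p - 2) * a * b = |a| ^ (p - 1) * |b| := by
      rw [mul_assoc]
      have : a * b = |a| * |b| := by
        rw [← abs_mul]
        exact (abs_of_nonneg hab).symm
      rw [this, ← mul_assoc, ← Real.rpow_add_one (ne_of_gt hapos)]
      ring_nf
    rw [key]
    have h1 : |b| ^ p = |b| ^ (p - 1) * |b| := by
      rw [← Real.rpow_add_one (ne_of_gt hbpos)]
      ring_nf
    rw [h1]
    apply mul_le_mul_of_nonneg_right _ (le_of_lt hbpos)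
    exact Real.rpow_le_rpow (le_of_lt hbpos) hba (by linarith)
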